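/- Let s, t be positive integers, p ∈ ℂ with p ≠ 0, q ∈ ℂ, and f(z) = z^{s+t} + p z^t + q. For v > 0, f has a root of norm v if and only if there exists φ ∈ [0, 2π) with q = |p|·v^t·e^{i·(π + arg(p) + t·φ)} − v^{s+t}·e^{i·(s+t)·φ}. (Equivalently: q lies, up to rotation, on the epitrochoid with parameters R = v^t·|p|·s/(s+t), r = v^t·|p|·t/(s+t), d = v^{s+t}.) -/

import Mathlib

open Polynomial

lemma epi_key (p : ℂ) (v : ℝ) (s t : ℕ) (φ : ℝ) :
    (‖p‖ : ℂ) * (v : ℂ) ^ t *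
        Complex.exp (Complex.I * ((Real.pi + p.arg + t * φ : ℝ) : ℂ))
      - (v : ℂ) ^ (s + t) * Complex.exp (Complex.I * (s + t) * φ)
    = -(p * ((v : ℂ) * Complex.exp (Complex.I * φ)) ^ t)
      - ((v : ℂ) * Complex.exp (Complex.I * φ)) ^ (s + t) := by
  have e1 : Complex.exp (Complex.I * ((Real.pi + p.arg + t * φ : ℝ) : ℂ))
      = Complex.exp (Real.pi * Complex.I) * Complex.exp (p.arg * Complex.I) *
        Complex.exp (Complex.I * φ) ^ t := by
    rw [← Complex.exp_nat_mul, ← Complex.exp_add, ← Complex.exp_add]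
    push_cast
    ring_nf
  have e2 : Complex.exp (Complex.I * (s + t) * φ)
      = Complex.exp (Complex.I * φ) ^ (s + t) := by
    rw [← Complex.exp_nat_mul]
    push_cast
    ring_nf
  rw [e1, e2, Complex.exp_pi_mul_I, mul_pow, mul_pow]
  linear_combination (-(v : ℂ) ^ t * Complex.exp (Complex.I * φ) ^ t) *
    Complex.norm_mul_exp_arg_mul_I p

/-- The trinomial `z^(s+t) + p z^t + q` (with `p ≠ 0`) has a root of norm
`v > 0` if and only if `q` lies on the epitrochoid
`φ ↦ |p| v^t e^(i(π + arg p + tφ)) - v^(s+t) e^(i(s+t)φ)`, i.e. (up to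
rotation) the epitrochoid with parameters `R = v^t |p| s/(s+t)`,
`r = v^t |p| t/(s+t)`, `d = v^(s+t)`. -/
theorem root_of_norm_iff_on_epitrochoid (s t : ℕ) (hs : 0 < s) (ht : 0 < t)
    (p q : ℂ) (hp : p ≠ 0) (v : ℝ) (hv : 0 < v) :
    (∃ z : ℂ, (X ^ (s + t) + C p * X ^ t + C q : Polynomial ℂ).eval z = 0 ∧
        ‖z‖ = v) ↔
    ∃ φ ∈ Set.Ico (0 : ℝ) (2 * Real.pi),
      q = (‖p‖ : ℂ) * (v : ℂ) ^ t *
            Complex.exp (Complex.I * ((Real.pi + p.arg + t * φ : ℝ) : ℂ))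
        - (v : ℂ) ^ (s + t) * Complex.exp (Complex.I * (s + t) * φ) := by
  have hpi := Real.pi_pos
  constructor
  · rintro ⟨z, hz, habs⟩
    simp only [eval_add, eval_mul, eval_pow, eval_C, eval_X] at hz
    set φ : ℝ := if 0 ≤ z.arg then z.arg else z.arg + 2 * Real.pi with hφ
    have harg1 := Complex.arg_le_pi z
    have harg2 := Complex.neg_pi_lt_arg z
    have hmem : φ ∈ Set.Ico (0 : ℝ) (2 * Real.pi) := by
      by_cases h : 0 ≤ z.arg
      · simp only [hφ, h, if_true]
        exact ⟨h, by linarith⟩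
      · simp only [hφ, h, if_false]
        push_neg at h
        exact ⟨by linarith, by linarith⟩
    refine ⟨φ, hmem, ?_⟩
    have hexp : Complex.exp (Complex.I * φ) = Complex.exp (z.arg * Complex.I) := by
      by_cases h : 0 ≤ z.arg
      · simp [hφ, h, mul_comm]
      · simp only [hφ, h, if_false]
        push_cast
        rw [mul_add, Complex.exp_add]
        have : Complex.I * (2 * Real.pi) = 2 * Real.pi * Complex.I := by ring
        rw [this, Complex.exp_two_pi_mul_I, mul_one, mul_comm]
    have hzv : (v : ℂ) * Complex.exp (Complex.I * φ) = z := by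
      rw [hexp, ← habs, Complex.norm_mul_exp_arg_mul_I]
    rw [epi_key, hzv]
    linear_combination hz
  · rintro ⟨φ, _, hq⟩
    refine ⟨(v : ℂ) * Complex.exp (Complex.I * φ), ?_, ?_⟩
    · simp only [eval_add, eval_mul, eval_pow, eval_C, eval_X]
      rw [epi_key] at hq
      linear_combination hq
    · rw [norm_mul, Complex.norm_exp]
      simp [Complex.norm_real, abs_of_pos hv]
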